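/- Let p and r be probability distributions with full support on a finite set and α ∈ [0,1). With q_i = p_i^{1-α} r_i^{α} / Z, Z = Σ_j p_j^{1-α} r_j^{α}, one has KL(q ‖ r) ≤ KL(p ‖ r). -/

import Mathlib

open Real Finset

private lemma jensen_log {ι : Type*} [Fintype ι] (w z : ι → ℝ)
    (hw : ∀ i, 0 < w i) (hw' : ∑ i, w i = 1) (hz : ∀ i, 0 < z i) :
    ∑ i, w i * Real.log (z i) ≤ Real.log (∑ i, w i * z i) := by
  have h := Real.geom_mean_le_arith_mean_weighted Finset.univ w z
    (fun i _ => (hw i).le) hw' (fun i _ => (hz i).le)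
  have hprod : (0:ℝ) < ∏ i, z i ^ w i :=
    Finset.prod_pos fun i _ => Real.rpow_pos_of_pos (hz i) _
  have := Real.log_le_log hprod h
  rwa [Real.log_prod (fun i _ => (Real.rpow_pos_of_pos (hz i) _).ne'),
    Finset.sum_congr rfl (fun i _ => Real.log_rpow (hz i) (w i))] at this

theorem stmt_15 {ι : Type*} [Fintype ι]
    (p r : ι → ℝ) (hp : ∀ i, 0 < p i) (hr : ∀ i, 0 < r i)
    (hps : ∑ i, p i = 1) (hrs : ∑ i, r i = 1)
    (α : ℝ) (hα : α ∈ Set.Ico (0:ℝ) 1)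
    (Z : ℝ) (hZ : Z = ∑ j, p j ^ (1 - α) * r j ^ α)
    (q : ι → ℝ) (hq : ∀ i, q i = p i ^ (1 - α) * r i ^ α / Z) :
    ∑ i, q i * Real.log (q i / r i) ≤ ∑ i, p i * Real.log (p i / r i) := by
  obtain ⟨hα0, hα1⟩ := hα
  rcases eq_or_lt_of_le hα0 with hα0' | hα0'
  · -- α = 0: q = p
    have hZ1 : Z = 1 := by
      rw [hZ, ← hα0']; simp [hps]
    have hqp : ∀ i, q i = p i := by
      intro i; rw [hq, hZ1, ← hα0']
      simp [Real.rpow_natCast, (hp i).ne']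
    simp [hqp]
  · -- α > 0
    have hne : (Finset.univ : Finset ι).Nonempty := by
      by_contra h
      rw [Finset.not_nonempty_iff_eq_empty] at h
      rw [h, Finset.sum_empty] at hps
      norm_num at hps
    have hZpos : 0 < Z := by
      rw [hZ]
      exact Finset.sum_pos (fun i _ => mul_pos (Real.rpow_pos_of_pos (hp i) _)
        (Real.rpow_pos_of_pos (hr i) _)) hne
    have hqpos : ∀ i, 0 < q i := fun i => by
      rw [hq]
      exact div_pos (mul_pos (Real.rpow_pos_of_pos (hp i) _)
        (Real.rpow_pos_of_pos (hr i) _)) hZpos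
    have hqs : ∑ i, q i = 1 := by
      simp only [hq]; rw [← Finset.sum_div, ← hZ, div_self hZpos.ne']
    -- Gibbs: ∑ q log(q/p) ≥ 0
    have gibbs : 0 ≤ ∑ i, q i * Real.log (q i / p i) := by
      have h := jensen_log q (fun i => p i / q i) hqpos hqs
        (fun i => div_pos (hp i) (hqpos i))
      have hsum : ∑ i, q i * (p i / q i) = 1 := by
        rw [Finset.sum_congr rfl (fun i _ => mul_div_cancel₀ (p i) (hqpos i).ne'), hps]
      rw [hsum, Real.log_one] at h
      have : ∑ i, q i * Real.log (q i / p i) = -∑ i, q i * Real.log (p i / q i) := by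
        rw [← Finset.sum_neg_distrib]
        refine Finset.sum_congr rfl fun i _ => ?_
        rw [← mul_neg, ← Real.log_inv, inv_div]
      linarith [this ▸ neg_nonneg.mpr h]
    -- middle: ∑ q ((1-α) log(q/p) + α log(q/r)) = - log Z
    have key : (1 - α) * ∑ i, q i * Real.log (q i / p i)
        + α * ∑ i, q i * Real.log (q i / r i) = - Real.log Z := by
      rw [Finset.mul_sum, Finset.mul_sum, ← Finset.sum_add_distrib]
      have : ∀ i ∈ Finset.univ, (1 - α) * (q i * Real.log (q i / p i))
          + α * (q i * Real.log (q i / r i)) = q i * (- Real.log Z) := by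
        intro i _
        have h1 : (1 - α) * Real.log (q i / p i) + α * Real.log (q i / r i)
            = - Real.log Z := by
          rw [Real.log_div (hqpos i).ne' (hp i).ne',
              Real.log_div (hqpos i).ne' (hr i).ne']
          have hqi : Real.log (q i) = (1 - α) * Real.log (p i) + α * Real.log (r i)
              - Real.log Z := by
            rw [hq, Real.log_div (mul_pos (Real.rpow_pos_of_pos (hp i) _) (Real.rpow_pos_of_pos (hr i) _)).ne' hZpos.ne',
                Real.log_mul (Real.rpow_pos_of_pos (hp i) _).ne'
                  (Real.rpow_pos_of_pos (hr i) _).ne',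
                Real.log_rpow (hp i), Real.log_rpow (hr i)]
          rw [hqi]; ring
        calc (1 - α) * (q i * Real.log (q i / p i)) + α * (q i * Real.log (q i / r i))
            = q i * ((1 - α) * Real.log (q i / p i) + α * Real.log (q i / r i)) := by ring
          _ = q i * (- Real.log Z) := by rw [h1]
      rw [Finset.sum_congr rfl this, ← Finset.sum_mul, hqs, one_mul]
    -- Jensen: - log Z ≤ α * KL(p‖r)
    have jen : - Real.log Z ≤ α * ∑ i, p i * Real.log (p i / r i) := by
      have h := jensen_log p (fun i => (r i / p i) ^ α) hp hps
        (fun i => Real.rpow_pos_of_pos (div_pos (hr i) (hp i)) _)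
      have hsum : ∑ i, p i * (r i / p i) ^ α = Z := by
        rw [hZ]
        refine Finset.sum_congr rfl fun i _ => ?_
        rw [Real.div_rpow (hr i).le (hp i).le, Real.rpow_sub (hp i), Real.rpow_one]
        field_simp
      rw [hsum] at h
      have hlog : ∀ i ∈ Finset.univ, p i * Real.log ((r i / p i) ^ α)
          = -(α * (p i * Real.log (p i / r i))) := by
        intro i _
        rw [Real.log_rpow (div_pos (hr i) (hp i)),
          Real.log_div (hr i).ne' (hp i).ne', Real.log_div (hp i).ne' (hr i).ne']
        ring
      rw [Finset.sum_congr rfl hlog, Finset.sum_neg_distrib, ← Finset.mul_sum] at h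
      linarith
    have h2 : α * ∑ i, q i * Real.log (q i / r i) ≤ - Real.log Z := by
      nlinarith [gibbs, key]
    have := h2.trans jen
    exact le_of_mul_le_mul_left this hα0'
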